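/- arXiv:0812.0117 — 4 statements merged into one kernel-verified Lean document; each statement's English description precedes it below -/
import Mathlib

section
/- Let N > 3 be a natural number, k ∈ {1, ..., N−2}, and t > 0. Then the sum I_t(k,N) := Σ_{j=k+1}^{N−1} exp(−t(1 − cos(πj/N))) satisfies I_t(k,N) ≤ (1/2)·√(π/2)·(N/√t)·exp(−2t k²/N²). -/
open Real MeasureTheory Finset

theorem eigenvalue_sum_gaussian_bound (N k : ℕ) (hN : 3 < N) (hk1 : 1 ≤ k)
    (hk2 : k ≤ N - 2) (t : ℝ) (ht : 0 < t) :
    ∑ j ∈ Finset.Icc (k + 1) (N - 1),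
        Real.exp (-t * (1 - Real.cos (Real.pi * j / N))) ≤
      (1 / 2) * Real.sqrt (Real.pi / 2) * ((N : ℝ) / Real.sqrt t) *
        Real.exp (-2 * t * k ^ 2 / N ^ 2) := by
  have hN0 : (0:ℝ) < N := by positivity
  set a : ℝ := 2 * t / (N:ℝ)^2 with ha_def
  have ha : 0 < a := by positivity
  have hkr : (0:ℝ) ≤ (k:ℝ) := Nat.cast_nonneg k
  have hkN : k ≤ N - 1 := by omega
  -- Step 1: termwise bound
  have h1 : ∑ j ∈ Finset.Icc (k + 1) (N - 1),
      Real.exp (-t * (1 - Real.cos (Real.pi * j / N))) ≤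
      ∑ j ∈ Finset.Icc (k + 1) (N - 1), Real.exp (-a * (j:ℝ)^2) := by
    apply Finset.sum_le_sum
    intro j hj
    simp only [Finset.mem_Icc] at hj
    have hjN : (j:ℝ) ≤ N := by
      have : j ≤ N := by omega
      exact_mod_cast this
    have hj0 : (0:ℝ) ≤ (j:ℝ) := Nat.cast_nonneg j
    have habs : |Real.pi * j / N| ≤ Real.pi := by
      rw [abs_of_nonneg (by positivity)]
      rw [div_le_iff₀ hN0]
      nlinarith [Real.pi_pos]
    have hcos := Real.cos_le_one_sub_mul_cos_sq habs
    apply Real.exp_le_exp.2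
    have hq : 2 / Real.pi ^ 2 * (Real.pi * j / N) ^ 2 = 2 * (j:ℝ)^2 / (N:ℝ)^2 := by
      field_simp
    rw [hq] at hcos
    have : 2 * (j:ℝ)^2 / (N:ℝ)^2 ≤ 1 - Real.cos (Real.pi * j / N) := by linarith
    calc -t * (1 - Real.cos (Real.pi * j / N)) ≤ -t * (2 * (j:ℝ)^2 / (N:ℝ)^2) := by
          apply neg_le_neg at this
          nlinarith
      _ = -a * (j:ℝ)^2 := by rw [ha_def]; ring
  -- Step 2: sum to interval integral
  have hanti : AntitoneOn (fun x : ℝ => Real.exp (-a * x^2)) (Set.Icc (k:ℝ) ((N-1 : ℕ):ℝ)) := by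
    intro x hx y hy hxy
    simp only
    apply Real.exp_le_exp.2
    have hx0 : (0:ℝ) ≤ x := le_trans hkr hx.1
    nlinarith [mul_nonneg (by linarith : (0:ℝ) ≤ y - x) (by linarith : (0:ℝ) ≤ y + x), ha.le,
      mul_nonneg (mul_nonneg (by linarith : (0:ℝ) ≤ y - x) (by linarith : (0:ℝ) ≤ y + x)) ha.le]
  have h2 : ∑ j ∈ Finset.Icc (k + 1) (N - 1), Real.exp (-a * (j:ℝ)^2) ≤
      ∫ x in (k:ℝ)..((N-1:ℕ):ℝ), Real.exp (-a * x^2) := by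
    have h := AntitoneOn.sum_le_integral_Ico hkN hanti
    refine le_trans (le_of_eq ?_) h
    have e1 := Finset.sum_Ico_add' (fun i : ℕ => Real.exp (-a * ((i:ℕ):ℝ)^2)) k (N-1) 1
    rw [e1, ← Finset.Ico_add_one_right_eq_Icc]
  -- Step 3: pointwise Gaussian shift bound inside the interval integral
  have hcont : ∀ c : ℝ, Continuous fun x : ℝ => Real.exp (-a * (x - c)^2) := by
    intro c; fun_prop
  have hkle : (k:ℝ) ≤ ((N-1:ℕ):ℝ) := by exact_mod_cast hkN
  have h3 : ∫ x in (k:ℝ)..((N-1:ℕ):ℝ), Real.exp (-a * x^2) ≤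
      ∫ x in (k:ℝ)..((N-1:ℕ):ℝ), Real.exp (-a * (k:ℝ)^2) * Real.exp (-a * (x - k)^2) := by
    apply intervalIntegral.integral_mono_on hkle
    · exact (by fun_prop : Continuous fun x : ℝ => Real.exp (-a * x^2)).intervalIntegrable _ _
    · exact (Continuous.mul continuous_const (hcont (k:ℝ))).intervalIntegrable _ _
    · intro x hx
      rw [← Real.exp_add]
      apply Real.exp_le_exp.2
      nlinarith [mul_nonneg (mul_nonneg ha.le hkr) (by linarith [hx.1] : (0:ℝ) ≤ x - (k:ℝ))]
  -- Step 4: evaluate / bound shifted integral by full Gaussian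
  have h4 : ∫ x in (k:ℝ)..((N-1:ℕ):ℝ), Real.exp (-a * (k:ℝ)^2) * Real.exp (-a * (x - k)^2)
      = Real.exp (-a * (k:ℝ)^2) * ∫ y in (0:ℝ)..(((N-1:ℕ):ℝ) - k), Real.exp (-a * y^2) := by
    rw [intervalIntegral.integral_const_mul]
    congr 1
    rw [intervalIntegral.integral_comp_sub_right (fun y => Real.exp (-a * y^2)) (k:ℝ)]
    simp
  have h5 : ∫ y in (0:ℝ)..(((N-1:ℕ):ℝ) - k), Real.exp (-a * y^2) ≤
      ∫ y in Set.Ioi (0:ℝ), Real.exp (-a * y^2) := by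
    rw [intervalIntegral.integral_of_le (by linarith)]
    apply setIntegral_mono_set
    · exact (integrable_exp_neg_mul_sq ha).integrableOn
    · filter_upwards with x using Real.exp_nonneg _
    · refine Filter.Eventually.of_forall (fun x hx => show x ∈ Set.Ioi (0:ℝ) from Set.mem_Ioi.2 ?_)
      exact hx.1
  have h6 : ∫ y in Set.Ioi (0:ℝ), Real.exp (-a * y^2) = Real.sqrt (Real.pi / a) / 2 :=
    integral_gaussian_Ioi a
  -- Step 5: arithmetic identification of the constant
  have hconst : Real.exp (-a * (k:ℝ)^2) * (Real.sqrt (Real.pi / a) / 2) =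
      (1 / 2) * Real.sqrt (Real.pi / 2) * ((N : ℝ) / Real.sqrt t) *
        Real.exp (-2 * t * k ^ 2 / N ^ 2) := by
    have he : -a * (k:ℝ)^2 = -2 * t * (k:ℝ) ^ 2 / (N:ℝ) ^ 2 := by
      rw [ha_def]; field_simp
    have hs : Real.sqrt (Real.pi / a) = Real.sqrt (Real.pi / 2) * ((N:ℝ) / Real.sqrt t) := by
      rw [ha_def]
      rw [show Real.pi / (2 * t / (N:ℝ)^2) = (Real.pi / 2) * ((N:ℝ)^2 / t) by
        field_simp]
      rw [Real.sqrt_mul (by positivity), Real.sqrt_div (by positivity) t,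
        Real.sqrt_sq hN0.le]
    rw [he, hs]
    ring
  calc ∑ j ∈ Finset.Icc (k + 1) (N - 1),
        Real.exp (-t * (1 - Real.cos (Real.pi * j / N)))
      ≤ ∑ j ∈ Finset.Icc (k + 1) (N - 1), Real.exp (-a * (j:ℝ)^2) := h1
    _ ≤ ∫ x in (k:ℝ)..((N-1:ℕ):ℝ), Real.exp (-a * x^2) := h2
    _ ≤ ∫ x in (k:ℝ)..((N-1:ℕ):ℝ), Real.exp (-a * (k:ℝ)^2) * Real.exp (-a * (x - k)^2) := h3
    _ = Real.exp (-a * (k:ℝ)^2) * ∫ y in (0:ℝ)..(((N-1:ℕ):ℝ) - k), Real.exp (-a * y^2) := h4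
    _ ≤ Real.exp (-a * (k:ℝ)^2) * (Real.sqrt (Real.pi / a) / 2) := by
        rw [← h6]
        exact mul_le_mul_of_nonneg_left h5 (Real.exp_nonneg _)
    _ = _ := hconst
end

section
/- Let N > 3 be a natural number, k ∈ {1, ..., N−2}, and t > 0. Then I_t(k,N) := Σ_{j=k+1}^{N−1} exp(−t(1 − cos(πj/N))) satisfies I_t(k,N) ≤ (1/2)·(N²/(k t))·exp(−2t k²/N²). -/
set_option maxHeartbeats 1000000

theorem eigenvalue_sum_tail_bound (N k : ℕ) (hN : 3 < N) (hk1 : 1 ≤ k)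
    (hk2 : k ≤ N - 2) (t : ℝ) (ht : 0 < t) :
    ∑ j ∈ Finset.Icc (k + 1) (N - 1),
        Real.exp (-t * (1 - Real.cos (Real.pi * j / N))) ≤
      (1 / 2) * ((N : ℝ) ^ 2 / (k * t)) * Real.exp (-2 * t * k ^ 2 / N ^ 2) := by
  have hNpos : (0:ℝ) < N := by positivity
  have hkpos : (0:ℝ) < k := by exact_mod_cast hk1
  set E : ℝ := Real.exp (-2 * t * k ^ 2 / N ^ 2) with hE
  set x : ℝ := 4 * t * k / N ^ 2 with hxdef
  have hxpos : 0 < x := by positivity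
  set r : ℝ := Real.exp (-x) with hr
  have hrpos : 0 < r := Real.exp_pos _
  have hrlt : r < 1 := by
    rw [hr, Real.exp_lt_one_iff]; linarith
  -- pointwise bound
  have hpt : ∀ j ∈ Finset.Icc (k + 1) (N - 1),
      Real.exp (-t * (1 - Real.cos (Real.pi * j / N))) ≤ E * r ^ (j - k) := by
    intro j hj
    simp only [Finset.mem_Icc] at hj
    obtain ⟨hj1, hj2⟩ := hj
    have hjN : (j:ℝ) ≤ N := by
      have : j ≤ N := le_trans hj2 (Nat.sub_le _ _)
      exact_mod_cast this
    have hjpos : (0:ℝ) ≤ j := by positivity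
    set θ : ℝ := Real.pi * j / N with hθ
    have hθ0 : 0 ≤ θ := by positivity
    have hθπ : θ ≤ Real.pi := by
      rw [hθ, div_le_iff₀ hNpos]
      nlinarith [Real.pi_pos]
    have hsin : (j:ℝ) / N ≤ Real.sin (θ / 2) := by
      have h := Real.mul_le_sin (x := θ / 2) (by linarith) (by linarith)
      calc (j:ℝ)/N = 2 / Real.pi * (θ / 2) := by
            rw [hθ]; field_simp [Real.pi_ne_zero]
        _ ≤ Real.sin (θ/2) := h
    have hcosid : 1 - Real.cos θ = 2 * Real.sin (θ/2) ^ 2 := by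
      have h1 : Real.cos (2 * (θ/2)) = 2 * Real.cos (θ/2) ^ 2 - 1 := Real.cos_two_mul _
      have h2 : Real.sin (θ/2) ^ 2 + Real.cos (θ/2) ^ 2 = 1 := Real.sin_sq_add_cos_sq _
      have h3 : (2 : ℝ) * (θ/2) = θ := by ring
      rw [h3] at h1
      linarith
    have hjN2 : 2 * t * ((j:ℝ)/N)^2 ≤ t * (1 - Real.cos θ) := by
      rw [hcosid]
      have h0 : (0:ℝ) ≤ (j:ℝ)/N := by positivity
      nlinarith [pow_le_pow_left₀ h0 hsin 2]
    have hEr : E * r ^ (j - k) = Real.exp (-2*t*(k:ℝ)^2/N^2 + (j - k : ℕ) * (-x)) := by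
      rw [hE, hr, Real.exp_add, Real.exp_nat_mul]
    rw [hEr, Real.exp_le_exp]
    have hkj : k ≤ j := le_trans (Nat.le_succ k) hj1
    have hcast : ((j - k : ℕ) : ℝ) = (j:ℝ) - k := Nat.cast_sub hkj
    rw [hcast]
    have hjk : (k:ℝ) ≤ j := by exact_mod_cast hkj
    have key : -2*t*(j:ℝ)^2/N^2 ≤ -2*t*(k:ℝ)^2/N^2 + ((j:ℝ) - k) * (-x) := by
      have h2 : -2*t*(j:ℝ)^2 ≤ -2*t*(k:ℝ)^2 + ((j:ℝ)-k) * -(4*t*k) := by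
        nlinarith [mul_nonneg ht.le (sq_nonneg ((j:ℝ)-k))]
      calc -2*t*(j:ℝ)^2/N^2 ≤ (-2*t*(k:ℝ)^2 + ((j:ℝ)-k) * -(4*t*k))/N^2 := by gcongr
        _ = -2*t*(k:ℝ)^2/N^2 + ((j:ℝ) - k) * (-x) := by rw [hxdef]; ring
    refine le_trans ?_ key
    have heq : 2 * t * ((j:ℝ)/N)^2 = 2*t*(j:ℝ)^2/N^2 := by field_simp
    rw [heq] at hjN2
    calc -t * (1 - Real.cos θ) = -(t * (1 - Real.cos θ)) := by ring
      _ ≤ -(2*t*(j:ℝ)^2/N^2) := neg_le_neg hjN2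
      _ = -2*t*(j:ℝ)^2/N^2 := by ring
  have hgeom : ∀ M : ℕ, ∑ i ∈ Finset.range M, r ^ i ≤ 1 / (1 - r) := by
    intro M
    rw [geom_sum_eq (ne_of_lt hrlt)]
    have e : (r^M - 1)/(r-1) = (1 - r^M)/(1-r) := by
      rw [div_eq_div_iff (by linarith) (by linarith)]; ring
    rw [e, div_le_div_iff₀ (by linarith) (by linarith)]
    have hrM : (0:ℝ) ≤ r ^ M := by positivity
    nlinarith
  -- reindex sum
  have hM1 : 1 ≤ N - 1 - k := by omega
  have hsum : ∑ j ∈ Finset.Icc (k + 1) (N - 1), r ^ (j - k) ≤ r / (1 - r) := by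
    have hMeq : k + (N - 1 - k) = N - 1 := by omega
    have hmap : Finset.Icc (k + 1) (N - 1)
        = (Finset.Icc 1 (N - 1 - k)).map (addLeftEmbedding k) := by
      rw [Finset.map_add_left_Icc, hMeq]
    rw [hmap, Finset.sum_map]
    simp only [addLeftEmbedding_apply, Nat.add_sub_cancel_left]
    set M := N - 1 - k with hMdef
    have hmap2 : Finset.Icc 1 M = (Finset.Icc 0 (M - 1)).map (addLeftEmbedding 1) := by
      rw [Finset.map_add_left_Icc]
      congr 1
      omega
    rw [hmap2, Finset.sum_map]
    simp only [addLeftEmbedding_apply]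
    have hIccRange : Finset.Icc 0 (M - 1) = Finset.range M := by
      ext i; simp [Finset.mem_Icc, Finset.mem_range]; omega
    rw [hIccRange]
    have : ∑ i ∈ Finset.range M, r ^ (1 + i) = r * ∑ i ∈ Finset.range M, r ^ i := by
      rw [Finset.mul_sum]
      apply Finset.sum_congr rfl
      intro i _
      rw [pow_add, pow_one]
    rw [this, div_eq_mul_one_div]
    exact mul_le_mul_of_nonneg_left (hgeom M) hrpos.le
  -- final
  have hrx : r / (1 - r) ≤ 1 / x := by
    rw [div_le_div_iff₀ (by linarith) hxpos]
    have hexp : x + 1 ≤ Real.exp x := Real.add_one_le_exp x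
    have hre : r * Real.exp x = 1 := by
      rw [hr, ← Real.exp_add]; simp
    nlinarith [hrpos]
  calc ∑ j ∈ Finset.Icc (k + 1) (N - 1),
        Real.exp (-t * (1 - Real.cos (Real.pi * j / N)))
      ≤ ∑ j ∈ Finset.Icc (k + 1) (N - 1), E * r ^ (j - k) := Finset.sum_le_sum hpt
    _ = E * ∑ j ∈ Finset.Icc (k + 1) (N - 1), r ^ (j - k) := by rw [Finset.mul_sum]
    _ ≤ E * (r / (1 - r)) := by
        exact mul_le_mul_of_nonneg_left hsum (Real.exp_pos _).le
    _ ≤ E * (1 / x) := mul_le_mul_of_nonneg_left hrx (Real.exp_pos _).le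
    _ ≤ (1 / 2) * ((N : ℝ) ^ 2 / (k * t)) * E := by
        rw [hxdef, show (1:ℝ) / (4 * t * k / N^2) = N^2/(4*t*k) by rw [one_div, inv_div]]
        have h1 : (N:ℝ)^2/(4*t*k) ≤ (1/2) * ((N:ℝ)^2/(k*t)) := by
          rw [div_le_iff₀ (by positivity)]
          have h2 : (1/2)*((N:ℝ)^2/(k*t)) * (4*t*k) = 2*(N:ℝ)^2 := by
            field_simp; ring
          rw [h2]
          nlinarith [sq_nonneg (N:ℝ)]
        rw [mul_comm E _]
        exact mul_le_mul_of_nonneg_right h1 (Real.exp_pos _).le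
end

section
/- Let G be a finite connected simple graph with N vertices and maximum degree δ, and let P be the transition matrix of the delayed random walk on G (P_{vw} = 1/δ if {v,w} is an edge, P_{vv} = 1 − deg(v)/δ, 0 otherwise). Then the spectral gap satisfies 1 − β₂ ≥ 4/(δ N²), where β₂ is the second largest eigenvalue of P. -/
open Matrix Finset

/-- The transition matrix of the delayed (lazy) random walk with degree parameter `δ`. -/
noncomputable def delayedRW {V : Type*} [Fintype V] [DecidableEq V] (G : SimpleGraph V)
    [DecidableRel G.Adj] (δ : ℕ) : Matrix V V ℝ :=
  fun v w => if G.Adj v w then 1 / δ else if v = w then 1 - G.degree v / δ else 0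

/-- sum of squares of nonnegative terms is at most square of the sum -/
lemma sum_sq_le_sq_sum' (s : Finset ℕ) (a : ℕ → ℝ) (h : ∀ i ∈ s, 0 ≤ a i) :
    ∑ i ∈ s, (a i)^2 ≤ (∑ i ∈ s, a i)^2 := by
  calc ∑ i ∈ s, (a i)^2 ≤ ∑ i ∈ s, a i * (∑ j ∈ s, a j) := by
        refine Finset.sum_le_sum fun i hi => ?_
        have h1 : a i ≤ ∑ j ∈ s, a j := Finset.single_le_sum h hi
        have h2 := h i hi
        nlinarith
    _ = (∑ i ∈ s, a i)^2 := by rw [← Finset.sum_mul]; ring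

lemma path_core (N : ℕ) (g : ℕ → ℝ)
    (hsum : ∑ i ∈ range N, g i = 0) :
    4 * ∑ i ∈ range N, g i ^ 2 ≤
      (N:ℝ)^2 * ∑ m ∈ range (N-1), (g (m+1) - g m)^2 := by
  rcases Nat.eq_zero_or_pos N with h0 | hN
  · simp [h0]
  set d : ℕ → ℝ := fun m => g (m+1) - g m with hd
  set Q : ℝ := ∑ i ∈ range N, g i ^ 2 with hQ
  set S : ℝ := ∑ m ∈ range (N-1), d m ^ 2 with hS
  -- B i j : weighted gap sum
  set B : ℕ → ℕ → ℝ := fun i j => ∑ m ∈ range (N-1), (if i ≤ m ∧ m < j then d m ^2 else 0)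
    with hB
  have hBnonneg : ∀ i j, 0 ≤ B i j := by
    intro i j
    refine Finset.sum_nonneg fun m _ => ?_
    split <;> positivity
  -- identity: double difference sum
  have inner : ∀ i, ∑ j ∈ range N, (g i - g j)^2 = N * g i ^2 + Q := by
    intro i
    have h1 : ∀ j, (g i - g j)^2 = g i ^2 - 2 * g i * g j + g j ^2 := fun j => by ring
    simp_rw [h1]
    rw [Finset.sum_add_distrib, Finset.sum_sub_distrib, Finset.sum_const, ← Finset.mul_sum,
      hsum, Finset.card_range, nsmul_eq_mul]
    ring
  have hA : ∑ i ∈ range N, ∑ j ∈ range N, (g i - g j)^2 = 2 * N * Q := by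
    simp_rw [inner]
    rw [Finset.sum_add_distrib, Finset.sum_const, Finset.card_range, nsmul_eq_mul,
      ← Finset.mul_sum]
    ring
  -- pointwise bound for ordered pairs
  have hBeq : ∀ i j, i ≤ j → j < N → B i j = ∑ m ∈ Finset.Ico i j, d m ^ 2 := by
    intro i j hij hj
    simp only [hB]
    rw [← Finset.sum_filter]
    congr 1
    ext m
    simp only [Finset.mem_filter, Finset.mem_range, Finset.mem_Ico]
    omega
  have hord : ∀ i j, i ≤ j → j < N → (g i - g j)^2 ≤ N * B i j := by
    intro i j hij hj
    have htel : g j - g i = ∑ m ∈ Finset.Ico i j, d m := by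
      rw [hd]
      rw [Finset.sum_Ico_eq_sub _ hij, Finset.sum_range_sub, Finset.sum_range_sub]
      ring
    have hCS : (∑ m ∈ Finset.Ico i j, d m)^2 ≤
        (Finset.Ico i j).card * ∑ m ∈ Finset.Ico i j, d m ^ 2 :=
      sq_sum_le_card_mul_sum_sq
    have hcard : ((Finset.Ico i j).card : ℝ) ≤ N := by
      rw [Nat.card_Ico]
      exact_mod_cast le_trans (Nat.sub_le j i) (le_of_lt hj)
    have hsq : (g i - g j)^2 = (g j - g i)^2 := by ring
    rw [hsq, htel, hBeq i j hij hj]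
    calc (∑ m ∈ Finset.Ico i j, d m)^2
        ≤ ((Finset.Ico i j).card : ℝ) * ∑ m ∈ Finset.Ico i j, d m ^ 2 := hCS
      _ ≤ N * ∑ m ∈ Finset.Ico i j, d m ^ 2 := by
          refine mul_le_mul_of_nonneg_right hcard ?_
          exact Finset.sum_nonneg fun m _ => sq_nonneg _
  have hpt : ∀ i ∈ range N, ∀ j ∈ range N, (g i - g j)^2 ≤ N * (B i j + B j i) := by
    intro i hi j hj
    simp only [Finset.mem_range] at hi hj
    rcases le_total i j with h | h
    · calc (g i - g j)^2 ≤ N * B i j := hord i j h hj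
        _ ≤ N * (B i j + B j i) := by
            have := hBnonneg j i
            have : (0:ℝ) ≤ N := Nat.cast_nonneg N
            nlinarith [hBnonneg j i, hBnonneg i j]
    · have hsq : (g i - g j)^2 = (g j - g i)^2 := by ring
      rw [hsq]
      calc (g j - g i)^2 ≤ N * B j i := hord j i h hi
        _ ≤ N * (B i j + B j i) := by
            nlinarith [hBnonneg j i, hBnonneg i j]
  -- counting: ∑_i ∑_j B i j
  have hcount : ∀ m ∈ range (N-1),
      (∑ i ∈ range N, ∑ j ∈ range N, (if i ≤ m ∧ m < j then d m ^2 else 0))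
        = ((m+1 : ℕ) : ℝ) * ((N - (m+1) : ℕ) : ℝ) * d m ^2 := by
    intro m hm
    simp only [Finset.mem_range] at hm
    have hfac : ∀ i j : ℕ, (if i ≤ m ∧ m < j then d m ^2 else 0)
        = (if i ≤ m then (1:ℝ) else 0) * (if m < j then d m ^2 else 0) := by
      intro i j
      by_cases h1 : i ≤ m <;> by_cases h2 : m < j <;> simp [h1, h2]
    simp_rw [hfac]
    rw [← Finset.sum_mul_sum]
    have c1 : ∑ i ∈ range N, (if i ≤ m then (1:ℝ) else 0) = ((m+1 : ℕ) : ℝ) := by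
      rw [← Finset.sum_filter]
      have : (range N).filter (fun i => i ≤ m) = range (m+1) := by
        ext x; simp only [Finset.mem_filter, Finset.mem_range]; omega
      rw [this, Finset.sum_const, Finset.card_range, nsmul_eq_mul, mul_one]
    have c2 : ∑ j ∈ range N, (if m < j then d m ^2 else 0) = ((N - (m+1) : ℕ) : ℝ) * d m ^2 := by
      rw [← Finset.sum_filter]
      have : (range N).filter (fun j => m < j) = Finset.Ico (m+1) N := by
        ext x; simp only [Finset.mem_filter, Finset.mem_range, Finset.mem_Ico]; omega
      rw [this, Finset.sum_const, Nat.card_Ico, nsmul_eq_mul]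
    rw [c1, c2]
    ring
  have hswap : ∑ i ∈ range N, ∑ j ∈ range N, B i j
      = ∑ m ∈ range (N-1), ((m+1 : ℕ) : ℝ) * ((N - (m+1) : ℕ) : ℝ) * d m ^2 := by
    simp only [hB]
    rw [show (∑ i ∈ range N, ∑ j ∈ range N, ∑ m ∈ range (N-1),
          if i ≤ m ∧ m < j then d m ^2 else 0)
        = ∑ i ∈ range N, ∑ m ∈ range (N-1), ∑ j ∈ range N,
          (if i ≤ m ∧ m < j then d m ^2 else 0)
        from Finset.sum_congr rfl fun i _ => Finset.sum_comm]
    rw [Finset.sum_comm]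
    exact Finset.sum_congr rfl fun m hm => hcount m hm
  have hm4 : ∀ m ∈ range (N-1),
      ((m+1 : ℕ) : ℝ) * ((N - (m+1) : ℕ) : ℝ) * d m ^2 ≤ (N:ℝ)^2/4 * d m ^2 := by
    intro m hm
    simp only [Finset.mem_range] at hm
    have hle : m + 1 ≤ N := by omega
    have hab : ((m+1 : ℕ) : ℝ) + ((N - (m+1) : ℕ) : ℝ) = (N : ℝ) := by
      push_cast [hle]; ring
    rw [← hab]
    nlinarith [mul_nonneg (sq_nonneg (((m+1 : ℕ) : ℝ) - ((N - (m+1) : ℕ) : ℝ)))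
      (sq_nonneg (d m))]
  have hrev : ∑ i ∈ range N, ∑ j ∈ range N, B j i
      = ∑ i ∈ range N, ∑ j ∈ range N, B i j := Finset.sum_comm
  have hchain : 2 * (N:ℝ) * Q ≤ 2 * N * ((N:ℝ)^2/4 * S) := by
    rw [← hA]
    calc ∑ i ∈ range N, ∑ j ∈ range N, (g i - g j)^2
        ≤ ∑ i ∈ range N, ∑ j ∈ range N, (N:ℝ) * (B i j + B j i) :=
          Finset.sum_le_sum fun i hi => Finset.sum_le_sum fun j hj => hpt i hi j hj
      _ = (N:ℝ) * (∑ i ∈ range N, ∑ j ∈ range N, B i j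
            + ∑ i ∈ range N, ∑ j ∈ range N, B j i) := by
          simp_rw [mul_add, Finset.sum_add_distrib, ← Finset.mul_sum]
      _ = 2 * (N:ℝ) * (∑ i ∈ range N, ∑ j ∈ range N, B i j) := by rw [hrev]; ring
      _ = 2 * (N:ℝ) * ∑ m ∈ range (N-1),
            ((m+1 : ℕ) : ℝ) * ((N - (m+1) : ℕ) : ℝ) * d m ^2 := by rw [hswap]
      _ ≤ 2 * (N:ℝ) * ((N:ℝ)^2/4 * S) := by
          refine mul_le_mul_of_nonneg_left ?_ (by positivity)
          rw [hS, Finset.mul_sum]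
          exact Finset.sum_le_sum fun m hm => le_trans (hm4 m hm) (by rw [div_mul_eq_mul_div])
  have hNpos : (0:ℝ) < N := by exact_mod_cast hN
  nlinarith [hchain, hNpos]

lemma cross_edge {V : Type*} {G : SimpleGraph V} (S : Set V) :
    ∀ {a b : V}, G.Walk a b → a ∈ S → b ∉ S → ∃ u v, G.Adj u v ∧ u ∈ S ∧ v ∉ S := by
  intro a b p
  induction p with
  | nil => intro ha hb; exact absurd ha hb
  | cons h q ih =>
    rename_i u v w
    intro ha hb
    by_cases hv : v ∈ S
    · exact ih hv hb
    · exact ⟨u, v, h, ha, hv⟩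

theorem poincare_spectral_gap (N : ℕ) (hN : 0 < N) (G : SimpleGraph (Fin N))
    [DecidableRel G.Adj] (hconn : G.Connected) (δ : ℕ) (hδ : G.maxDegree = δ)
    (hδpos : 0 < δ) :
    ∀ β ∈ spectrum ℝ (delayedRW G δ), β ≠ 1 → β ≤ 1 - 4 / ((δ : ℝ) * N ^ 2) := by
  classical
  intro β hβ hβ1
  set P : Matrix (Fin N) (Fin N) ℝ := delayedRW G δ with hPdef
  have hδR : (0:ℝ) < δ := by exact_mod_cast hδpos
  have hNR : (0:ℝ) < N := by exact_mod_cast hN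
  -- eigenvector
  obtain ⟨f, hf0, hfv⟩ : ∃ f : Fin N → ℝ, f ≠ 0 ∧ P.mulVec f = β • f := by
    have h1 : β ∈ spectrum ℝ (Matrix.toLinAlgEquiv' P) := by rwa [AlgEquiv.spectrum_eq]
    have h2 : Module.End.HasEigenvalue
        (Matrix.toLinAlgEquiv' P : Module.End ℝ (Fin N → ℝ)) β :=
      Module.End.HasEigenvalue.of_mem_spectrum h1
    obtain ⟨v, hv⟩ := h2.exists_hasEigenvector
    refine ⟨v, hv.right, ?_⟩
    have := hv.apply_eq_smul
    rwa [Matrix.toLinAlgEquiv'_apply] at this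
  -- entrywise decomposition of P
  have hPent : ∀ v w, P v w = (if G.Adj v w then (δ:ℝ)⁻¹ else 0)
      + (if v = w then (1:ℝ) - (G.degree v : ℝ) / (δ:ℝ) else 0) := by
    intro v w
    by_cases h : G.Adj v w
    · have hne : v ≠ w := G.ne_of_adj h
      simp [hPdef, delayedRW, h, hne, one_div]
    · by_cases h2 : v = w
      · subst h2; simp [hPdef, delayedRW, h]
      · simp [hPdef, delayedRW, h, h2]
  have hadjsum : ∀ (v : Fin N) (c : ℝ),
      (∑ w, (if G.Adj v w then c else 0)) = (G.degree v : ℝ) * c := by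
    intro v c
    rw [← Finset.sum_filter]
    rw [show Finset.univ.filter (fun w => G.Adj v w) = G.neighborFinset v from
      (SimpleGraph.neighborFinset_eq_filter (G := G) (v := v)).symm]
    rw [Finset.sum_const, nsmul_eq_mul, SimpleGraph.degree]
  have hrow : ∀ v, (∑ w, P v w) = 1 := by
    intro v
    have heq : (∑ w, P v w)
        = (G.degree v : ℝ) * (δ:ℝ)⁻¹ + ((1:ℝ) - (G.degree v : ℝ)/(δ:ℝ)) := by
      simp_rw [hPent]
      rw [Finset.sum_add_distrib, hadjsum]
      congr 1
      rw [Finset.sum_ite_eq Finset.univ v (fun _ => (1:ℝ) - (G.degree v : ℝ)/(δ:ℝ))]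
      simp
    rw [heq]
    field_simp
    ring
  have hPsymm : ∀ v w, P v w = P w v := by
    intro v w
    rw [hPent, hPent]
    by_cases h : v = w
    · subst h; rfl
    · have h' : ¬ w = v := fun hh => h hh.symm
      have hiff : G.Adj v w ↔ G.Adj w v := G.adj_comm v w
      simp [h, h', hiff]
  have hcol : ∀ w, (∑ v, P v w) = 1 := by
    intro w
    calc (∑ v, P v w) = ∑ v, P w v := Finset.sum_congr rfl fun v _ => hPsymm v w
      _ = 1 := hrow w
  -- sum of f is zero
  have hsumf : (∑ v, f v) = 0 := by
    have h1 : (∑ v, P.mulVec f v) = ∑ w, f w := by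
      simp_rw [Matrix.mulVec, dotProduct]
      rw [Finset.sum_comm]
      refine Finset.sum_congr rfl fun w _ => ?_
      rw [← Finset.sum_mul, hcol, one_mul]
    have h2 : (∑ v, P.mulVec f v) = β * ∑ v, f v := by
      rw [hfv]
      simp [Finset.mul_sum]
    have h3 : β * (∑ v, f v) = ∑ v, f v := by rw [← h2, h1]
    have h4 : (β - 1) * (∑ v, f v) = 0 := by rw [sub_mul, h3]; ring
    rcases mul_eq_zero.mp h4 with h | h
    · exact absurd (by linarith [sub_eq_zero.mp h] : β = 1) hβ1
    · exact h
  -- quadratic form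
  set Q : ℝ := ∑ v, f v ^ 2 with hQdef
  set W : ℝ := ∑ v, ∑ w, (if G.Adj v w then f v * f w else 0) with hWdef
  set Dg : ℝ := ∑ v, f v ^ 2 * (G.degree v : ℝ) with hDgdef
  set E : ℝ := ∑ v, ∑ w, (if G.Adj v w then (f v - f w)^2 else 0) with hEdef
  have hQpos : 0 < Q := by
    rcases Function.ne_iff.mp hf0 with ⟨v, hv⟩
    refine Finset.sum_pos' (fun w _ => sq_nonneg _) ⟨v, Finset.mem_univ v, ?_⟩
    · exact lt_of_le_of_ne (sq_nonneg _) (Ne.symm (pow_ne_zero 2 hv))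
  have hq1 : ∀ v, f v * P.mulVec f v
      = (δ:ℝ)⁻¹ * (∑ w, if G.Adj v w then f v * f w else 0)
        + (1 - (G.degree v:ℝ)/(δ:ℝ)) * f v ^ 2 := by
    intro v
    have hmv : P.mulVec f v = ∑ w, P v w * f w := rfl
    rw [hmv, Finset.mul_sum]
    have hterm : ∀ w, f v * (P v w * f w)
        = (if G.Adj v w then (δ:ℝ)⁻¹ * (f v * f w) else 0)
          + (if v = w then (1 - (G.degree v:ℝ)/(δ:ℝ)) * (f v * f w) else 0) := by
      intro w
      rw [hPent]
      split_ifs with h1 h2 h2 <;> ring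
    simp_rw [hterm]
    rw [Finset.sum_add_distrib]
    congr 1
    · rw [Finset.mul_sum]
      refine Finset.sum_congr rfl fun w _ => ?_
      rw [mul_ite, mul_zero]
    · rw [Finset.sum_ite_eq Finset.univ v
        (fun w => (1 - (G.degree v:ℝ)/(δ:ℝ)) * (f v * f w))]
      simp [sq]
  have hquad : (1 - β) * Q = (Dg - W) / δ := by
    have hL : ∑ v, f v * P.mulVec f v = β * Q := by
      rw [hfv]
      simp_rw [Pi.smul_apply, smul_eq_mul, hQdef, Finset.mul_sum]
      exact Finset.sum_congr rfl fun v _ => by ring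
    have hR : ∑ v, f v * P.mulVec f v = (δ:ℝ)⁻¹ * W + (Q - Dg / δ) := by
      simp_rw [hq1]
      rw [Finset.sum_add_distrib, ← Finset.mul_sum, ← hWdef]
      congr 1
      rw [hQdef, hDgdef, Finset.sum_div, ← Finset.sum_sub_distrib]
      exact Finset.sum_congr rfl fun v _ => by ring
    have := hL.symm.trans hR
    field_simp at this ⊢
    linarith
  have hE2 : E = 2 * (Dg - W) := by
    have hterm : ∀ v w : Fin N, (if G.Adj v w then (f v - f w)^2 else 0)
        = (if G.Adj v w then f v ^2 else 0) + (if G.Adj v w then f w ^2 else 0)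
          - 2 * (if G.Adj v w then f v * f w else 0) := by
      intro v w; split_ifs <;> ring
    have e1 : ∑ v, ∑ w, (if G.Adj v w then f v ^2 else 0) = Dg := by
      rw [hDgdef]
      exact Finset.sum_congr rfl fun v _ => by rw [hadjsum v (f v ^ 2)]; ring
    have e2 : ∑ v : Fin N, ∑ w : Fin N, (if G.Adj v w then f w ^2 else 0) = Dg := by
      rw [Finset.sum_comm, hDgdef]
      refine Finset.sum_congr rfl fun w _ => ?_
      have : ∀ v : Fin N, (if G.Adj v w then f w ^2 else 0)
          = (if G.Adj w v then f w ^2 else 0) := by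
        intro v
        by_cases h : G.Adj v w
        · rw [if_pos h, if_pos ((G.adj_comm v w).mp h)]
        · rw [if_neg h, if_neg (fun hh => h ((G.adj_comm w v).mp hh))]
      simp_rw [this]
      rw [hadjsum w (f w ^ 2)]; ring
    rw [hEdef]
    simp_rw [hterm, Finset.sum_sub_distrib, Finset.sum_add_distrib, ← Finset.mul_sum]
    rw [e1, e2, ← hWdef]
    ring
  -- sorted values
  set σ : Equiv.Perm (Fin N) := Tuple.sort f with hσdef
  set g : ℕ → ℝ := fun m => if h : m < N then f (σ ⟨m, h⟩) else 0 with hgdef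
  have hgval : ∀ (m : ℕ) (h : m < N), g m = f (σ ⟨m, h⟩) := by
    intro m h
    simp only [hgdef]
    rw [dif_pos h]
  have hmono : Monotone (f ∘ σ) := Tuple.monotone_sort f
  have hgmono : ∀ a b : ℕ, a ≤ b → b < N → g a ≤ g b := by
    intro a b hab hb
    have ha : a < N := lt_of_le_of_lt hab hb
    rw [hgval a ha, hgval b hb]
    exact hmono (show (⟨a, ha⟩ : Fin N) ≤ ⟨b, hb⟩ from hab)
  have hgsum : ∑ i ∈ Finset.range N, g i = 0 := by
    rw [← Fin.sum_univ_eq_sum_range g N]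
    calc ∑ i : Fin N, g (i:ℕ) = ∑ i : Fin N, f (σ i) :=
        Finset.sum_congr rfl fun i _ => by rw [hgval _ i.isLt, Fin.eta]
      _ = ∑ i, f i := Equiv.sum_comp σ f
      _ = 0 := hsumf
  have hgsq : ∑ i ∈ Finset.range N, g i ^ 2 = Q := by
    rw [← Fin.sum_univ_eq_sum_range (fun i => g i ^ 2) N]
    calc ∑ i : Fin N, g (i:ℕ) ^ 2 = ∑ i : Fin N, f (σ i) ^ 2 :=
        Finset.sum_congr rfl fun i _ => by rw [hgval _ i.isLt, Fin.eta]
      _ = ∑ i, f i ^ 2 := Equiv.sum_comp σ (fun i => f i ^ 2)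
      _ = Q := hQdef.symm
  set S : ℝ := ∑ m ∈ Finset.range (N-1), (g (m+1) - g m)^2 with hSdef
  have hcore : 4 * Q ≤ (N:ℝ)^2 * S := by
    have := path_core N g hgsum
    rwa [hgsq] at this
  -- index function
  set idx : Fin N → ℕ := fun v => ((σ.symm v : Fin N) : ℕ) with hidxdef
  have hidxlt : ∀ v, idx v < N := fun v => (σ.symm v).isLt
  have hgidx : ∀ v, g (idx v) = f v := by
    intro v
    have h1 : (⟨idx v, hidxlt v⟩ : Fin N) = σ.symm v := Fin.eta _ _
    rw [hgval _ (hidxlt v), h1, Equiv.apply_symm_apply]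
  have hN1 : N - 1 < N := by omega
  -- crossing edges
  have hcross : ∀ m, m < N - 1 → ∃ p : Fin N × Fin N,
      G.Adj p.1 p.2 ∧ idx p.1 ≤ m ∧ m < idx p.2 := by
    intro m hm
    have ha0 : idx (σ ⟨0, hN⟩) = 0 := by
      simp only [hidxdef, Equiv.symm_apply_apply]
    have hb0 : idx (σ ⟨N-1, hN1⟩) = N - 1 := by
      simp only [hidxdef, Equiv.symm_apply_apply]
    have hSmem : σ ⟨0, hN⟩ ∈ {v : Fin N | idx v ≤ m} := by
      simp only [Set.mem_setOf_eq, ha0]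
      exact Nat.zero_le m
    have hSnmem : σ ⟨N-1, hN1⟩ ∉ {v : Fin N | idx v ≤ m} := by
      simp only [Set.mem_setOf_eq, hb0]
      omega
    obtain ⟨p⟩ := hconn.preconnected (σ ⟨0, hN⟩) (σ ⟨N-1, hN1⟩)
    obtain ⟨u, v, huv, hu, hv⟩ := cross_edge {v : Fin N | idx v ≤ m} p hSmem hSnmem
    exact ⟨(u, v), huv, hu, Nat.lt_of_not_le hv⟩
  -- choice of crossing edge
  set c : ℕ → Fin N × Fin N := fun m =>
    if h : m < N - 1 then (hcross m h).choose else (σ ⟨0, hN⟩, σ ⟨0, hN⟩) with hcdef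
  have hc : ∀ m, m < N - 1 → G.Adj (c m).1 (c m).2 ∧ idx (c m).1 ≤ m ∧ m < idx (c m).2 := by
    intro m hm
    simp only [hcdef, dif_pos hm]
    exact (hcross m hm).choose_spec
  set Tlt : Finset (Fin N × Fin N) :=
    Finset.univ.filter (fun p => idx p.1 < idx p.2) with hTltdef
  have hmaps : ∀ m ∈ Finset.range (N-1), c m ∈ Tlt := by
    intro m hm
    simp only [Finset.mem_range] at hm
    obtain ⟨-, h1, h2⟩ := hc m hm
    simp only [hTltdef, Finset.mem_filter, Finset.mem_univ, true_and]
    omega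
  have hfib : S = ∑ p ∈ Tlt, ∑ m ∈ (Finset.range (N-1)).filter (fun m => c m = p),
      (g (m+1) - g m)^2 := by
    rw [hSdef]
    exact (Finset.sum_fiberwise_of_maps_to hmaps _).symm
  have hperp : ∀ p ∈ Tlt, (∑ m ∈ (Finset.range (N-1)).filter (fun m => c m = p),
      (g (m+1) - g m)^2) ≤ (if G.Adj p.1 p.2 then (f p.1 - f p.2)^2 else 0) := by
    intro p hp
    set F := (Finset.range (N-1)).filter (fun m => c m = p) with hF
    rcases Finset.eq_empty_or_nonempty F with hFe | ⟨m₀, hm₀⟩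
    · rw [hFe, Finset.sum_empty]
      split
      · exact sq_nonneg _
      · exact le_refl 0
    · have hm₀' := Finset.mem_filter.mp hm₀
      have hm₀r : m₀ < N - 1 := Finset.mem_range.mp hm₀'.1
      have hAdj : G.Adj p.1 p.2 := hm₀'.2 ▸ (hc m₀ hm₀r).1
      rw [if_pos hAdj]
      have hprop : ∀ m ∈ F, idx p.1 ≤ m ∧ m < idx p.2 ∧ m < N - 1 := by
        intro m hm
        have hm' := Finset.mem_filter.mp hm
        have hmr : m < N - 1 := Finset.mem_range.mp hm'.1
        obtain ⟨-, h1, h2⟩ := hc m hmr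
        rw [hm'.2] at h1 h2
        exact ⟨h1, h2, hmr⟩
      have hdnonneg : ∀ m, m + 1 < N → 0 ≤ g (m+1) - g m := by
        intro m hm1
        have := hgmono m (m+1) (Nat.le_succ m) hm1
        linarith
      set T : ℝ := ∑ m ∈ F, (g (m+1) - g m) with hT
      have hFnn : ∀ m ∈ F, 0 ≤ g (m+1) - g m := by
        intro m hm
        exact hdnonneg m (by have := (hprop m hm).2.2; omega)
      have h1 : ∑ m ∈ F, (g (m+1) - g m)^2 ≤ T^2 := sum_sq_le_sq_sum' F _ hFnn
      have hsub : F ⊆ Finset.Ico (idx p.1) (idx p.2) := by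
        intro m hm
        rw [Finset.mem_Ico]
        exact ⟨(hprop m hm).1, (hprop m hm).2.1⟩
      have h2 : T ≤ ∑ m ∈ Finset.Ico (idx p.1) (idx p.2), (g (m+1) - g m) := by
        refine Finset.sum_le_sum_of_subset_of_nonneg hsub ?_
        intro m hm _
        rw [Finset.mem_Ico] at hm
        exact hdnonneg m (by have := hidxlt p.2; omega)
      have h3 : ∑ m ∈ Finset.Ico (idx p.1) (idx p.2), (g (m+1) - g m) = f p.2 - f p.1 := by
        have hle : idx p.1 ≤ idx p.2 := by
          simp only [hTltdef, Finset.mem_filter] at hp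
          omega
        rw [Finset.sum_Ico_eq_sub _ hle, Finset.sum_range_sub, Finset.sum_range_sub,
          hgidx, hgidx]
        ring
      have hT0 : 0 ≤ T := Finset.sum_nonneg hFnn
      calc ∑ m ∈ F, (g (m+1) - g m)^2 ≤ T^2 := h1
        _ ≤ (f p.2 - f p.1)^2 := by nlinarith [h2, h3, hT0]
        _ = (f p.1 - f p.2)^2 := by ring
  have hSElt : S ≤ ∑ p ∈ Tlt, (if G.Adj p.1 p.2 then (f p.1 - f p.2)^2 else 0) := by
    rw [hfib]
    exact Finset.sum_le_sum hperp
  set Tgt : Finset (Fin N × Fin N) :=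
    Finset.univ.filter (fun p => idx p.2 < idx p.1) with hTgtdef
  have hgtlt : ∑ p ∈ Tgt, (if G.Adj p.1 p.2 then (f p.1 - f p.2)^2 else 0)
      = ∑ p ∈ Tlt, (if G.Adj p.1 p.2 then (f p.1 - f p.2)^2 else 0) := by
    refine Finset.sum_equiv (Equiv.prodComm (Fin N) (Fin N)) ?_ ?_
    · intro p
      simp only [hTgtdef, hTltdef, Finset.mem_filter, Finset.mem_univ, true_and,
        Equiv.prodComm_apply, Prod.fst_swap, Prod.snd_swap]
    · intro p hp
      show (if G.Adj p.1 p.2 then (f p.1 - f p.2)^2 else 0)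
        = (if G.Adj p.2 p.1 then (f p.2 - f p.1)^2 else 0)
      by_cases h : G.Adj p.1 p.2
      · rw [if_pos h, if_pos ((G.adj_comm _ _).mp h)]
        ring
      · rw [if_neg h, if_neg (fun hh => h ((G.adj_comm _ _).mp hh))]
  have hdisj : Disjoint Tlt Tgt := by
    rw [Finset.disjoint_left]
    intro p hp hq
    simp only [hTltdef, hTgtdef, Finset.mem_filter, Finset.mem_univ, true_and] at hp hq
    omega
  have hEsplit : (∑ p ∈ Tlt, (if G.Adj p.1 p.2 then (f p.1 - f p.2)^2 else 0))
      + (∑ p ∈ Tgt, (if G.Adj p.1 p.2 then (f p.1 - f p.2)^2 else 0)) ≤ E := by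
    rw [← Finset.sum_union hdisj]
    have hEprod : E = ∑ p : Fin N × Fin N,
        (if G.Adj p.1 p.2 then (f p.1 - f p.2)^2 else 0) := by
      rw [hEdef]
      exact (Fintype.sum_prod_type (f := fun p : Fin N × Fin N =>
        if G.Adj p.1 p.2 then (f p.1 - f p.2)^2 else 0)).symm
    rw [hEprod]
    refine Finset.sum_le_sum_of_subset_of_nonneg (Finset.subset_univ _) ?_
    intro p _ _
    split
    · exact sq_nonneg _
    · exact le_refl 0
  have h2S : 2 * S ≤ E := by linarith [hSElt, hgtlt, hEsplit]
  -- conclusion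
  have e1 : (1 - β) * Q = E / (2*(δ:ℝ)) := by
    rw [hquad, hE2]
    field_simp
  have hfinal : 4 / ((δ:ℝ) * N^2) ≤ 1 - β := by
    rw [div_le_iff₀ (by positivity)]
    have hEeq : (1-β) * ((δ:ℝ) * (N:ℝ)^2) * Q = (N:ℝ)^2 * (E / 2) := by
      rw [show (1-β) * ((δ:ℝ) * (N:ℝ)^2) * Q = ((1-β)*Q) * ((δ:ℝ) * (N:ℝ)^2) from by ring,
        e1]
      field_simp
    have key : 4 * Q ≤ (1-β) * ((δ:ℝ) * (N:ℝ)^2) * Q := by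
      rw [hEeq]
      calc (4:ℝ) * Q ≤ (N:ℝ)^2 * S := hcore
        _ ≤ (N:ℝ)^2 * (E/2) := by
            refine mul_le_mul_of_nonneg_left (by linarith [h2S]) (by positivity)
    have h4 : (4:ℝ) ≤ (1-β) * ((δ:ℝ) * (N:ℝ)^2) :=
      le_of_mul_le_mul_right (by linarith [key]) hQpos
    linarith [h4]
  linarith [hfinal]
end

section
/- Let μ be a probability measure on cluster sizes, i.e., a random variable |C| taking values in the positive integers, such that A·m^{−a} ≤ P[|C| ≥ m] ≤ B·m^{−b} for all m ≥ 1, with A, B, a > 0 and 0 < b < 1. Then for all t > √288, E[(1/|C|)·exp(−tK/√|C|)] ≥ D·t^{−2a(1+1/b)}, where D = e^{−K}·(A/2)/(1 + (2B/A)^{1/b}) and K > 0 is any constant. -/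
open MeasureTheory

set_option maxHeartbeats 4000000

theorem annealed_return_lower_bound {Ω : Type*} [MeasurableSpace Ω]
    (μ : Measure Ω) [IsProbabilityMeasure μ]
    (C : Ω → ℕ) (hmeas : Measurable C) (hpos : ∀ ω, 1 ≤ C ω)
    (A B a b : ℝ) (hA : 0 < A) (hB : 0 < B) (ha : 0 < a) (hb0 : 0 < b) (hb1 : b < 1)
    (hlow : ∀ m : ℕ, 1 ≤ m → A * (m : ℝ) ^ (-a) ≤ (μ {ω | m ≤ C ω}).toReal)
    (hup : ∀ m : ℕ, 1 ≤ m → (μ {ω | m ≤ C ω}).toReal ≤ B * (m : ℝ) ^ (-b))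
    (K : ℝ) (hK : 0 < K) (t : ℝ) (ht : Real.sqrt 288 < t) :
    Real.exp (-K) * (A / 2) / (1 + (2 * B / A) ^ (1 / b)) * t ^ (-(2 * a * (1 + 1 / b))) ≤
      ∫ ω, (1 / (C ω : ℝ)) * Real.exp (-t * K / Real.sqrt (C ω)) ∂μ := by
  have ht0 : 0 < t := lt_of_le_of_lt (Real.sqrt_nonneg 288) ht
  have hS' : (288:ℝ) < t^2 := by
    have h288 : Real.sqrt 288 ^ 2 = 288 := Real.sq_sqrt (by norm_num)
    nlinarith [Real.sqrt_nonneg (288:ℝ)]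
  set S : ℝ := t^2 with hSdef
  clear_value S
  have hS : (288:ℝ) < S := hS'
  have hS0 : (0:ℝ) < S := by linarith
  have hS1 : (1:ℝ) ≤ S := by linarith
  have hsq : Real.sqrt S = t := by rw [hSdef]; exact Real.sqrt_sq ht0.le
  set q : ℝ := a + a/b with hqdef
  clear_value q
  have hq0 : 0 < q := by rw [hqdef]; positivity
  -- basic consequences of the hypotheses
  have huniv : {ω | 1 ≤ C ω} = Set.univ := Set.eq_univ_of_forall hpos
  have hτ1 : (μ {ω | 1 ≤ C ω}).toReal = 1 := by
    rw [huniv, measure_univ, ENNReal.toReal_one]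
  have hA1 : A ≤ 1 := by
    have h := hlow 1 le_rfl
    rw [hτ1] at h
    simpa using h
  have hB1 : 1 ≤ B := by
    have h := hup 1 le_rfl
    rw [hτ1] at h
    simpa using h
  have loglele : ∀ {u v : ℝ}, 0 < u → u ≤ v → Real.log u ≤ Real.log v := by
    intro u v hu huv
    rcases eq_or_lt_of_le huv with h | h
    · rw [h]
    · exact (Real.log_lt_log hu h).le
  have hab : b ≤ a := by
    by_contra hcon
    push_neg at hcon
    have hba : 0 < b - a := by linarith
    set x : ℝ := (B/A) ^ (1/(b-a)) with hxdef
    have hx0 : 0 ≤ x := Real.rpow_nonneg (by positivity) _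
    set m : ℕ := ⌈x⌉₊ + 1 with hmdef
    have hm1 : 1 ≤ m := Nat.le_add_left 1 _
    have hxm : x < (m:ℝ) := by
      have h := Nat.le_ceil x
      have h2 : ((⌈x⌉₊ : ℕ) : ℝ) + 1 = (m:ℝ) := by rw [hmdef]; push_cast; ring
      linarith
    have hm0 : (0:ℝ) < m := lt_of_le_of_lt hx0 hxm
    have h1 : A * (m:ℝ)^(-a) ≤ B * (m:ℝ)^(-b) := le_trans (hlow m hm1) (hup m hm1)
    have hsplit : (m:ℝ)^(-a) = (m:ℝ)^(b-a) * (m:ℝ)^(-b) := by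
      rw [← Real.rpow_add hm0]; congr 1; ring
    rw [hsplit, ← mul_assoc] at h1
    have hmb : (0:ℝ) < (m:ℝ)^(-b) := Real.rpow_pos_of_pos hm0 _
    have h2 : A * (m:ℝ)^(b-a) ≤ B := le_of_mul_le_mul_right h1 hmb
    have h3 : B/A < (m:ℝ)^(b-a) := by
      have hlt : x^(b-a) < (m:ℝ)^(b-a) := Real.rpow_lt_rpow hx0 hxm hba
      have hx1 : x^(b-a) = B/A := by
        rw [hxdef, ← Real.rpow_mul (by positivity : (0:ℝ) ≤ B/A),
          show 1/(b-a)*(b-a) = (1:ℝ) by field_simp]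
        exact Real.rpow_one _
      linarith [hx1 ▸ hlt]
    rw [div_lt_iff₀ hA] at h3
    nlinarith
  set R : ℝ := (2 * B / A) ^ (1 / b) with hRdef
  have h2BA0 : (0:ℝ) < 2*B/A := by positivity
  have hR2 : (2:ℝ) ≤ R := by
    have hBA2 : (2:ℝ) ≤ 2*B/A := by rw [le_div_iff₀ hA]; nlinarith
    have h1 : (2*B/A) ^ (1:ℝ) ≤ (2*B/A) ^ (1/b) :=
      Real.rpow_le_rpow_of_exponent_le (by linarith) (by rw [le_div_iff₀ hb0]; linarith)
    rw [Real.rpow_one] at h1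
    rw [hRdef]
    exact le_trans hBA2 h1
  clear_value R
  have hR0 : (0:ℝ) < R := by linarith
  have h1R : (0:ℝ) < 1 + R := by linarith
  have hba1 : (1:ℝ) ≤ a/b := by rw [le_div_iff₀ hb0]; linarith
  have haab : a ≤ a/b := by rw [le_div_iff₀ hb0]; nlinarith
  -- the integrand
  set g : ℕ → ℝ := fun n => (1/(n:ℝ)) * Real.exp (-t * K / Real.sqrt (n:ℝ)) with hgdef
  have hgapp : ∀ n : ℕ, g n = (1/(n:ℝ)) * Real.exp (-t * K / Real.sqrt (n:ℝ)) := by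
    intro n; rw [hgdef]
  clear_value g
  have hg0 : ∀ n : ℕ, 0 ≤ g n := by
    intro n; rw [hgapp]; positivity
  have hg1 : ∀ n : ℕ, g n ≤ 1 := by
    intro n
    rw [hgapp]
    have h1 : (1:ℝ)/(n:ℝ) ≤ 1 := by
      rcases Nat.eq_zero_or_pos n with h | h
      · simp [h]
      · rw [div_le_one (by exact_mod_cast h)]
        exact_mod_cast h
    have h2 : Real.exp (-t * K / Real.sqrt (n:ℝ)) ≤ 1 := by
      calc Real.exp (-t * K / Real.sqrt (n:ℝ)) ≤ Real.exp 0 := by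
            apply Real.exp_le_exp.2
            apply div_nonpos_of_nonpos_of_nonneg (by nlinarith) (Real.sqrt_nonneg _)
        _ = 1 := Real.exp_zero
    have h3 : (0:ℝ) ≤ 1/(n:ℝ) := by positivity
    nlinarith [Real.exp_pos (-t*K/Real.sqrt (n:ℝ))]
  have hmg : Measurable fun ω => g (C ω) := (measurable_from_top (f := g)).comp hmeas
  have hint : Integrable (fun ω => g (C ω)) μ := by
    apply Integrable.mono' (integrable_const (1:ℝ)) hmg.aestronglyMeasurable
    filter_upwards with ω
    rw [Real.norm_eq_abs, abs_of_nonneg (hg0 _)]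
    exact hg1 _
  have hg0ae : 0 ≤ᵐ[μ] fun ω => g (C ω) := ae_of_all _ fun ω => hg0 (C ω)
  -- monotonicity of the tail
  have htail_mono : ∀ j k : ℕ, j ≤ k →
      (μ {ω | k ≤ C ω}).toReal ≤ (μ {ω | j ≤ C ω}).toReal := by
    intro j k hjk
    apply ENNReal.toReal_mono (measure_ne_top μ _)
    apply measure_mono
    intro ω hω
    exact le_trans hjk hω
  -- key interval bound
  have key : ∀ P Q : ℕ, 1 ≤ P → P ≤ Q →
      ((μ {ω | P ≤ C ω}).toReal - (μ {ω | Q+1 ≤ C ω}).toReal) *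
        (Real.exp (-t * K / Real.sqrt (P:ℝ)) * (1/(Q:ℝ))) ≤
        ∫ ω in {ω | P ≤ C ω ∧ C ω ≤ Q}, g (C ω) ∂μ := by
    intro P Q hP hPQ
    have hms : MeasurableSet {ω | P ≤ C ω ∧ C ω ≤ Q} :=
      hmeas (show MeasurableSet {n : ℕ | P ≤ n ∧ n ≤ Q} from trivial)
    have hm2 : MeasurableSet {ω | Q+1 ≤ C ω} :=
      hmeas (show MeasurableSet {n : ℕ | Q+1 ≤ n} from trivial)
    have hsplit : {ω | P ≤ C ω} = {ω | P ≤ C ω ∧ C ω ≤ Q} ∪ {ω | Q+1 ≤ C ω} := by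
      ext ω
      simp only [Set.mem_setOf_eq, Set.mem_union]
      omega
    have hdisj : Disjoint {ω | P ≤ C ω ∧ C ω ≤ Q} {ω | Q+1 ≤ C ω} := by
      rw [Set.disjoint_left]
      rintro ω ⟨h1, h2⟩ h3
      simp only [Set.mem_setOf_eq] at h3
      omega
    have hmeq : (μ {ω | P ≤ C ω}).toReal =
        (μ {ω | P ≤ C ω ∧ C ω ≤ Q}).toReal + (μ {ω | Q+1 ≤ C ω}).toReal := by
      rw [hsplit, measure_union hdisj hm2,
        ENNReal.toReal_add (measure_ne_top μ _) (measure_ne_top μ _)]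
    have hconst : ∀ ω ∈ {ω | P ≤ C ω ∧ C ω ≤ Q},
        Real.exp (-t * K / Real.sqrt (P:ℝ)) * (1/(Q:ℝ)) ≤ g (C ω) := by
      rintro ω ⟨h1, h2⟩
      have hn0 : 0 < C ω := hpos ω
      have hP0 : (0:ℝ) < (P:ℝ) := by exact_mod_cast hP
      have hsP : (0:ℝ) < Real.sqrt (P:ℝ) := Real.sqrt_pos.2 hP0
      have hsle : Real.sqrt (P:ℝ) ≤ Real.sqrt (C ω : ℝ) :=
        Real.sqrt_le_sqrt (by exact_mod_cast h1)
      have e1 : Real.exp (-t * K / Real.sqrt (P:ℝ)) ≤ Real.exp (-t * K / Real.sqrt (C ω : ℝ)) := by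
        apply Real.exp_le_exp.2
        rw [neg_mul, neg_div, neg_div, neg_le_neg_iff]
        exact div_le_div_of_nonneg_left (by positivity) hsP hsle
      have e2 : (1:ℝ)/(Q:ℝ) ≤ 1/(C ω : ℝ) :=
        one_div_le_one_div_of_le (by exact_mod_cast hn0) (by exact_mod_cast h2)
      have h4 := mul_le_mul e1 e2 (by positivity) (Real.exp_pos _).le
      rw [hgapp]
      nlinarith [h4]
    have hge := setIntegral_ge_of_const_le hms (measure_ne_top μ _) hconst hint.integrableOn
    have heq : ((μ {ω | P ≤ C ω}).toReal - (μ {ω | Q+1 ≤ C ω}).toReal) *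
        (Real.exp (-t * K / Real.sqrt (P:ℝ)) * (1/(Q:ℝ))) =
        (Real.exp (-t * K / Real.sqrt (P:ℝ)) * (1/(Q:ℝ))) *
          (μ {ω | P ≤ C ω ∧ C ω ≤ Q}).toReal := by
      rw [show (μ {ω | P ≤ C ω ∧ C ω ≤ Q}).toReal =
        (μ {ω | P ≤ C ω}).toReal - (μ {ω | Q+1 ≤ C ω}).toReal by linarith [hmeq]]
      ring
    rw [heq]
    exact (mul_comm _ _).trans_le hge
  -- the master single-threshold bound
  have master : ∀ P : ℕ, 1 ≤ P →
      q * (Real.log (P:ℝ) - Real.log S) ≤ K - t * K / Real.sqrt (P:ℝ) →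
      Real.exp (-K) * (A / 2) / (1 + R) * S ^ (-q) ≤ ∫ ω, g (C ω) ∂μ := by
    intro P hP hcond
    have hP0 : (0:ℝ) < (P:ℝ) := by exact_mod_cast hP
    have hP1 : (1:ℝ) ≤ (P:ℝ) := by exact_mod_cast hP
    have hPab : (P:ℝ) ≤ (P:ℝ)^(a/b) := by
      calc (P:ℝ) = (P:ℝ)^(1:ℝ) := (Real.rpow_one _).symm
        _ ≤ (P:ℝ)^(a/b) := Real.rpow_le_rpow_of_exponent_le hP1 hba1
    have hPab1 : (1:ℝ) ≤ (P:ℝ)^(a/b) := le_trans hP1 hPab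
    have hPabpos : (0:ℝ) < (P:ℝ)^(a/b) := Real.rpow_pos_of_pos hP0 _
    set Qr : ℝ := R * (P:ℝ)^(a/b) with hQrdef
    have hQr0 : (0:ℝ) < Qr := by rw [hQrdef]; exact mul_pos hR0 hPabpos
    set Q : ℕ := ⌈Qr⌉₊ with hQdef
    have hQlo : Qr ≤ (Q:ℝ) := by rw [hQdef]; exact Nat.le_ceil _
    have hQup : (Q:ℝ) < Qr + 1 := by rw [hQdef]; exact Nat.ceil_lt_add_one hQr0.le
    clear_value Qr Q
    have hQhi : (Q:ℝ) ≤ (1+R) * (P:ℝ)^(a/b) := by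
      have h3 : Qr + 1 ≤ (1+R) * (P:ℝ)^(a/b) := by
        have : Qr + 1 ≤ Qr + (P:ℝ)^(a/b) := by linarith
        rw [hQrdef] at this ⊢
        nlinarith
      linarith
    have hPQ : P ≤ Q := by
      have h1 : (P:ℝ) ≤ Qr := by
        have h2 : (P:ℝ)^(a/b) ≤ R * (P:ℝ)^(a/b) := by nlinarith
        rw [hQrdef]
        linarith
      exact_mod_cast le_trans h1 hQlo
    have hQ0 : (0:ℝ) < (Q:ℝ) := lt_of_lt_of_le hP0 (by exact_mod_cast hPQ)
    have hlowP := hlow P hP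
    have hupQ := hup (Q+1) (by omega)
    push_cast at hupQ
    have hQ1r : Qr ≤ (Q:ℝ)+1 := by linarith
    have hmonob : ((Q:ℝ)+1)^(-b) ≤ Qr^(-b) := by
      rw [Real.rpow_neg (by positivity), Real.rpow_neg hQr0.le]
      exact inv_anti₀ (Real.rpow_pos_of_pos hQr0 _)
        (Real.rpow_le_rpow hQr0.le hQ1r hb0.le)
    have hQrb : Qr^(-b) = A/(2*B) * (P:ℝ)^(-a) := by
      rw [hQrdef, Real.mul_rpow hR0.le (Real.rpow_nonneg hP0.le _)]
      have e1 : R^(-b) = A/(2*B) := by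
        rw [hRdef, ← Real.rpow_mul h2BA0.le,
          show 1/b * -b = -(1:ℝ) by field_simp, Real.rpow_neg h2BA0.le,
          Real.rpow_one, inv_div]
      have e2 : ((P:ℝ)^(a/b))^(-b) = (P:ℝ)^(-a) := by
        rw [← Real.rpow_mul hP0.le]
        congr 1
        field_simp
      rw [e1, e2]
    have htailQ : (μ {ω | Q+1 ≤ C ω}).toReal ≤ A/2 * (P:ℝ)^(-a) := by
      have h1 : (μ {ω | Q+1 ≤ C ω}).toReal ≤ B * Qr^(-b) :=
        le_trans hupQ (mul_le_mul_of_nonneg_left hmonob hB.le)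
      have h2 : B * (A/(2*B) * (P:ℝ)^(-a)) = A/2 * (P:ℝ)^(-a) := by
        field_simp
      rw [hQrb, h2] at h1
      exact h1
    have htail : A/2 * (P:ℝ)^(-a) ≤
        (μ {ω | P ≤ C ω}).toReal - (μ {ω | Q+1 ≤ C ω}).toReal := by
      linarith [hlowP, htailQ]
    have hkey := key P Q hP hPQ
    have hEle : (∫ ω in {ω | P ≤ C ω ∧ C ω ≤ Q}, g (C ω) ∂μ) ≤ ∫ ω, g (C ω) ∂μ :=
      setIntegral_le_integral hint hg0ae
    have hchain : A/2 * (P:ℝ)^(-a) * (Real.exp (-t * K / Real.sqrt (P:ℝ)) * (1/(Q:ℝ))) ≤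
        ∫ ω, g (C ω) ∂μ := by
      calc A/2 * (P:ℝ)^(-a) * (Real.exp (-t * K / Real.sqrt (P:ℝ)) * (1/(Q:ℝ)))
          ≤ ((μ {ω | P ≤ C ω}).toReal - (μ {ω | Q+1 ≤ C ω}).toReal) *
            (Real.exp (-t * K / Real.sqrt (P:ℝ)) * (1/(Q:ℝ))) :=
            mul_le_mul_of_nonneg_right htail (by positivity)
        _ ≤ _ := le_trans hkey hEle
    have hexp : Real.exp (-K) * S^(-q) ≤ (P:ℝ)^(-q) * Real.exp (-t * K / Real.sqrt (P:ℝ)) := by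
      rw [Real.rpow_def_of_pos hS0, Real.rpow_def_of_pos hP0, ← Real.exp_add, ← Real.exp_add]
      apply Real.exp_le_exp.2
      have e : -t * K / Real.sqrt (P:ℝ) = -(t*K/Real.sqrt (P:ℝ)) := by
        rw [neg_mul, neg_div]
      rw [e]
      nlinarith [hcond]
    have hPsplit : (P:ℝ)^(-q) = (P:ℝ)^(-a) * ((P:ℝ)^(a/b))⁻¹ := by
      rw [← Real.rpow_neg hP0.le (a/b), ← Real.rpow_add hP0]
      congr 1
      rw [hqdef]; ring
    have hQinv : 1/((1+R) * (P:ℝ)^(a/b)) ≤ 1/(Q:ℝ) :=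
      one_div_le_one_div_of_le hQ0 hQhi
    have hfin : Real.exp (-K) * (A/2) / (1+R) * S^(-q) ≤
        A/2 * (P:ℝ)^(-a) * (Real.exp (-t * K / Real.sqrt (P:ℝ)) * (1/(Q:ℝ))) := by
      have h1 : Real.exp (-K) * (A/2) / (1+R) * S^(-q)
          = A/2 / (1+R) * (Real.exp (-K) * S^(-q)) := by ring
      rw [h1]
      calc A/2 / (1+R) * (Real.exp (-K) * S^(-q))
          ≤ A/2 / (1+R) * ((P:ℝ)^(-q) * Real.exp (-t * K / Real.sqrt (P:ℝ))) :=
            mul_le_mul_of_nonneg_left hexp (by positivity)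
        _ = A/2 * (P:ℝ)^(-a) *
            (Real.exp (-t * K / Real.sqrt (P:ℝ)) * (1/((1+R) * (P:ℝ)^(a/b)))) := by
            rw [hPsplit]
            field_simp
        _ ≤ A/2 * (P:ℝ)^(-a) * (Real.exp (-t * K / Real.sqrt (P:ℝ)) * (1/(Q:ℝ))) := by
            apply mul_le_mul_of_nonneg_left _ (by positivity)
            exact mul_le_mul_of_nonneg_left hQinv (Real.exp_pos _).le
    exact le_trans hfin hchain
  -- rewrite the goal
  have hgoal : t ^ (-(2 * a * (1 + 1 / b))) = S ^ (-q) := by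
    rw [hSdef, ← Real.rpow_natCast t 2, ← Real.rpow_mul ht0.le]
    congr 1
    push_cast
    rw [hqdef]
    ring
  have hEeq : (∫ ω, (1 / (C ω : ℝ)) * Real.exp (-t * K / Real.sqrt (C ω)) ∂μ)
      = ∫ ω, g (C ω) ∂μ := by
    congr 1
    ext ω
    rw [hgapp]
  rw [hgoal, hEeq]
  -- the threshold M
  set M : ℕ := ⌈S⌉₊ with hMdef
  have hM289 : 289 ≤ M := by
    have h : 288 < M := by
      rw [hMdef]
      exact Nat.lt_ceil.2 (by push_cast; linarith)
    omega
  have hSM : S ≤ (M:ℝ) := by rw [hMdef]; exact Nat.le_ceil S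
  have hMS1 : (M:ℝ) < S + 1 := by rw [hMdef]; exact Nat.ceil_lt_add_one hS0.le
  clear_value M
  have hM1 : 1 ≤ M := by omega
  have hM0 : (0:ℝ) < (M:ℝ) := lt_of_lt_of_le hS0 hSM
  have hsqrtM : t ≤ Real.sqrt (M:ℝ) := by
    rw [← hsq]; exact Real.sqrt_le_sqrt hSM
  have hsqrtM0 : (0:ℝ) < Real.sqrt (M:ℝ) := lt_of_lt_of_le ht0 hsqrtM
  by_cases hC1 : q * (Real.log (M:ℝ) - Real.log S) ≤ K - t * K / Real.sqrt (M:ℝ)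
  · exact master M hM1 hC1
  push_neg at hC1
  -- the case K not large: first derive t < sqrt M and the bound on K
  have hwt : t < Real.sqrt (M:ℝ) := by
    rcases lt_or_eq_of_le hsqrtM with h | h
    · exact h
    · exfalso
      have hMS : (M:ℝ) = S := by
        have h2 := Real.sq_sqrt hM0.le
        rw [← h] at h2
        rw [hSdef]
        exact h2.symm
      rw [hMS, hsq] at hC1
      have he : t*K/t = K := by field_simp
      rw [he, sub_self, sub_self, mul_zero] at hC1
      exact lt_irrefl 0 hC1
  have hwub : Real.sqrt (M:ℝ) ≤ t*(289/288) := by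
    have hy2 : (M:ℝ) ≤ (t*(289/288))^2 := by nlinarith [hMS1, hS, hSdef]
    calc Real.sqrt (M:ℝ) ≤ Real.sqrt ((t*(289/288))^2) := Real.sqrt_le_sqrt hy2
      _ = t*(289/288) := Real.sqrt_sq (by positivity)
  have hw0 : (0:ℝ) < Real.sqrt (M:ℝ) := hsqrtM0
  have hΔ : Real.log (M:ℝ) - Real.log S ≤ 2*((Real.sqrt (M:ℝ) - t)/t) := by
    have hlogM : Real.log (M:ℝ) = 2 * Real.log (Real.sqrt (M:ℝ)) := by
      have h0 : Real.log ((Real.sqrt (M:ℝ))^2) = 2 * Real.log (Real.sqrt (M:ℝ)) := by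
        rw [Real.log_pow]
        push_cast
        ring
      rw [Real.sq_sqrt hM0.le] at h0
      exact h0
    have hlogS : Real.log S = 2 * Real.log t := by
      rw [hSdef, Real.log_pow]
      push_cast
      ring
    have h1 : Real.log (Real.sqrt (M:ℝ)) - Real.log t ≤ (Real.sqrt (M:ℝ) - t)/t := by
      rw [← Real.log_div (ne_of_gt hw0) (ne_of_gt ht0)]
      have h2 := Real.log_le_sub_one_of_pos (show (0:ℝ) < Real.sqrt (M:ℝ)/t from div_pos hw0 ht0)
      have h3 : Real.sqrt (M:ℝ)/t - 1 = (Real.sqrt (M:ℝ) - t)/t := by field_simp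
      linarith
    rw [hlogM, hlogS]
    linarith
  have hK2q : K * t < 2 * q * Real.sqrt (M:ℝ) := by
    have h1 : K - t*K/Real.sqrt (M:ℝ) < q * (2*((Real.sqrt (M:ℝ) - t)/t)) := by
      calc K - t*K/Real.sqrt (M:ℝ) = K - t * K / Real.sqrt (M:ℝ) := by ring
        _ < q * (Real.log (M:ℝ) - Real.log S) := hC1
        _ ≤ q * (2*((Real.sqrt (M:ℝ) - t)/t)) := mul_le_mul_of_nonneg_left hΔ hq0.le
    have e1 : (K - t*K/Real.sqrt (M:ℝ)) * (Real.sqrt (M:ℝ)*t) =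
        K*t*(Real.sqrt (M:ℝ) - t) := by
      field_simp
    have e2 : (q * (2*((Real.sqrt (M:ℝ) - t)/t))) * (Real.sqrt (M:ℝ)*t) =
        2*q*Real.sqrt (M:ℝ)*(Real.sqrt (M:ℝ) - t) := by
      field_simp
    have h3 : K*t*(Real.sqrt (M:ℝ) - t) < 2*q*Real.sqrt (M:ℝ)*(Real.sqrt (M:ℝ) - t) := by
      have h4 := mul_lt_mul_of_pos_right h1 (show (0:ℝ) < Real.sqrt (M:ℝ)*t from mul_pos hw0 ht0)
      rw [e1, e2] at h4
      exact h4
    have hwt0 : 0 < Real.sqrt (M:ℝ) - t := by linarith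
    exact lt_of_mul_lt_mul_right h3 hwt0.le
  have hKq : K ≤ q * (289/144) := by
    have h5 := mul_le_mul_of_nonneg_left hwub (show (0:ℝ) ≤ 2*q by linarith)
    have h4 : K * t ≤ (q*(289/144)) * t := by nlinarith [hK2q, h5]
    exact le_of_mul_le_mul_right h4 ht0
  -- setup N
  have hSab1 : (1:ℝ) ≤ S^(a/b) := by
    calc (1:ℝ) = S^(0:ℝ) := (Real.rpow_zero S).symm
      _ ≤ S^(a/b) := Real.rpow_le_rpow_of_exponent_le hS1 (le_of_lt (by positivity))
  have hSabS : S ≤ S^(a/b) := by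
    calc S = S^(1:ℝ) := (Real.rpow_one S).symm
      _ ≤ S^(a/b) := Real.rpow_le_rpow_of_exponent_le hS1 hba1
  have hSabpos : (0:ℝ) < S^(a/b) := Real.rpow_pos_of_pos hS0 _
  set Nr : ℝ := R * S^(a/b) with hNrdef
  have hNr0 : 0 < Nr := by rw [hNrdef]; exact mul_pos hR0 hSabpos
  set N : ℕ := ⌈Nr⌉₊ with hNdef
  have hNlo : Nr ≤ (N:ℝ) := by rw [hNdef]; exact Nat.le_ceil _
  have hNup : (N:ℝ) < Nr + 1 := by rw [hNdef]; exact Nat.ceil_lt_add_one hNr0.le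
  clear_value Nr N
  have hNhi : (N:ℝ) ≤ (1+R) * S^(a/b) := by
    have h3 : Nr + 1 ≤ (1+R) * S^(a/b) := by
      have h4 : Nr + 1 ≤ Nr + S^(a/b) := by linarith
      rw [hNrdef] at h4 ⊢
      nlinarith
    linarith only [h3, hNup]
  have hMN : M ≤ N := by
    have h2' : 2*S^(a/b) ≤ R * S^(a/b) := mul_le_mul_of_nonneg_right hR2 hSabpos.le
    have h1 : (M:ℝ) ≤ (N:ℝ) := by
      rw [hNrdef] at hNlo
      linarith only [hSabS, hMS1, hS1, h2', hNlo]
    exact_mod_cast h1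
  have hN0 : (0:ℝ) < (N:ℝ) := lt_of_lt_of_le hM0 (by exact_mod_cast hMN)
  have hN1exp : Real.exp (-K) ≤ Real.exp (-t * K / Real.sqrt (M:ℝ)) := by
    apply Real.exp_le_exp.2
    have h1 : t*K/Real.sqrt (M:ℝ) ≤ K := by
      rw [div_le_iff₀ hsqrtM0]
      linarith only [mul_le_mul_of_nonneg_right hsqrtM hK.le]
    rw [neg_mul, neg_div]
    linarith only [h1]
  have hupN : (μ {ω | N+1 ≤ C ω}).toReal ≤ A/2 * S^(-a) := by
    have h2 := hup (N+1) (by omega)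
    push_cast at h2
    have hNr1 : Nr ≤ (N:ℝ)+1 := by linarith only [hNlo]
    have hmono : ((N:ℝ)+1)^(-b) ≤ Nr^(-b) := by
      rw [Real.rpow_neg (show (0:ℝ) ≤ (N:ℝ)+1 by positivity), Real.rpow_neg hNr0.le]
      exact inv_anti₀ (Real.rpow_pos_of_pos hNr0 _)
        (Real.rpow_le_rpow hNr0.le hNr1 hb0.le)
    have hNrb : Nr^(-b) = A/(2*B) * S^(-a) := by
      rw [hNrdef, Real.mul_rpow hR0.le (Real.rpow_nonneg hS0.le _)]
      have e1 : R^(-b) = A/(2*B) := by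
        rw [hRdef, ← Real.rpow_mul h2BA0.le,
          show 1/b * -b = -(1:ℝ) by field_simp, Real.rpow_neg h2BA0.le,
          Real.rpow_one, inv_div]
      have e2 : (S^(a/b))^(-b) = S^(-a) := by
        rw [← Real.rpow_mul hS0.le]
        congr 1
        field_simp
      rw [e1, e2]
    have h3 : B * (A/(2*B) * S^(-a)) = A/2 * S^(-a) := by
      field_simp
    calc (μ {ω | N+1 ≤ C ω}).toReal ≤ B * ((N:ℝ)+1)^(-b) := h2
      _ ≤ B * Nr^(-b) := mul_le_mul_of_nonneg_left hmono hB.le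
      _ = A/2 * S^(-a) := by rw [hNrb, h3]
  have hτMN1 : (μ {ω | N+1 ≤ C ω}).toReal ≤ (μ {ω | M ≤ C ω}).toReal :=
    htail_mono M (N+1) (by omega)
  -- common final comparison
  have hSsplit : S^(-q) = S^(-a) * (S^(a/b))⁻¹ := by
    rw [← Real.rpow_neg hS0.le (a/b), ← Real.rpow_add hS0]
    congr 1
    rw [hqdef]; ring
  have hNinv : 1/((1+R)*S^(a/b)) ≤ 1/(N:ℝ) := one_div_le_one_div_of_le hN0 hNhi
  have hfinal_const : Real.exp (-K) * (A/2) / (1+R) * S^(-q) ≤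
      (Real.exp (-K) * (1/(N:ℝ))) * (A/2 * S^(-a)) := by
    have heq : Real.exp (-K) * (A/2) / (1+R) * S^(-q)
        = (Real.exp (-K) * (1/((1+R)*S^(a/b)))) * (A/2 * S^(-a)) := by
      rw [hSsplit]
      field_simp
    rw [heq]
    apply mul_le_mul_of_nonneg_right _ (by positivity)
    exact mul_le_mul_of_nonneg_left hNinv (Real.exp_pos _).le
  have hkey2 := key M N hM1 hMN
  have hEle : (∫ ω in {ω | M ≤ C ω ∧ C ω ≤ N}, g (C ω) ∂μ) ≤ ∫ ω, g (C ω) ∂μ :=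
    setIntegral_le_integral hint hg0ae
  by_cases hτc : A * S^(-a) ≤ (μ {ω | M ≤ C ω}).toReal
  · -- large tail at M: the interval [M, N] suffices
    have h1 : A/2 * S^(-a) ≤ (μ {ω | M ≤ C ω}).toReal - (μ {ω | N+1 ≤ C ω}).toReal := by
      linarith only [hupN, hτc]
    have h2 : (Real.exp (-K) * (1/(N:ℝ))) * (A/2 * S^(-a)) ≤
        ((μ {ω | M ≤ C ω}).toReal - (μ {ω | N+1 ≤ C ω}).toReal) *
          (Real.exp (-t * K / Real.sqrt (M:ℝ)) * (1/(N:ℝ))) := by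
      rw [mul_comm (Real.exp (-K) * (1/(N:ℝ))) (A/2 * S^(-a))]
      apply mul_le_mul h1 (mul_le_mul_of_nonneg_right hN1exp (by positivity))
        (by positivity) (le_trans (by positivity) h1)
    linarith only [le_trans hkey2 hEle, hfinal_const, h2]
  · -- small tail at M: use the forced mass at m₁ = M - 1 together with [M, N]
    push_neg at hτc
    set m₁ : ℕ := M - 1 with hm₁def
    clear_value m₁
    have hm₁M : m₁ + 1 = M := by omega
    have hm₁1 : 1 ≤ m₁ := by omega
    have hm₁288 : 288 ≤ m₁ := by omega
    have hm₁r : (m₁:ℝ) + 1 = (M:ℝ) := by exact_mod_cast congrArg (Nat.cast (R := ℝ)) hm₁M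
    have hm₁0 : (0:ℝ) < (m₁:ℝ) := by
      have h : (1:ℝ) ≤ (m₁:ℝ) := by exact_mod_cast hm₁1
      linarith only [h]
    have hm₁S : (m₁:ℝ) < S := by linarith only [hMS1, hm₁r]
    have hm₁le : (m₁:ℝ) ≤ S := hm₁S.le
    have hsm₁ : (0:ℝ) < Real.sqrt (m₁:ℝ) := Real.sqrt_pos.2 hm₁0
    have hsm₁sq : Real.sqrt (m₁:ℝ)^2 = (m₁:ℝ) := Real.sq_sqrt hm₁0.le
    have hm288 : (288:ℝ) ≤ (m₁:ℝ) := by exact_mod_cast hm₁288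
    -- numeric log facts
    have hlogS5 : (5:ℝ) < Real.log S := by
      rw [Real.lt_log_iff_exp_lt hS0]
      have h1 : Real.exp 5 = Real.exp 1 ^ (5:ℕ) := by
        rw [← Real.exp_nat_mul]; norm_num
      have h2 : Real.exp 1 ^ (5:ℕ) < 2.7182818286^(5:ℕ) :=
        pow_lt_pow_left₀ Real.exp_one_lt_d9 (Real.exp_pos 1).le (by norm_num)
      have h3 : (2.7182818286:ℝ)^(5:ℕ) < 288 := by norm_num
      rw [h1]
      linarith
    have hlog2 : (0.6931:ℝ) < Real.log 2 := by
      have := Real.log_two_gt_d9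
      linarith
    -- c₂ ≤ c₁
    have hc21 : Real.exp (-K) * (1/(N:ℝ)) ≤
        Real.exp (-t * K / Real.sqrt (m₁:ℝ)) * (1/(m₁:ℝ)) := by
      by_contra hcc
      push_neg at hcc
      have hc₁0 : 0 < Real.exp (-t * K / Real.sqrt (m₁:ℝ)) * (1/(m₁:ℝ)) :=
        mul_pos (Real.exp_pos _) (one_div_pos.2 hm₁0)
      have hlog := Real.log_lt_log hc₁0 hcc
      rw [Real.log_mul (Real.exp_ne_zero _) (ne_of_gt (one_div_pos.2 hm₁0)),
        Real.log_mul (Real.exp_ne_zero _) (ne_of_gt (one_div_pos.2 hN0)),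
        Real.log_exp, Real.log_exp, one_div, one_div, Real.log_inv, Real.log_inv] at hlog
      -- hlog : -t*K/√m₁ - log m₁ < -K - log N
      have hlogN : Real.log R + (a/b) * Real.log S ≤ Real.log (N:ℝ) := by
        have h1 : Real.log Nr ≤ Real.log (N:ℝ) := loglele hNr0 hNlo
        rw [hNrdef, Real.log_mul (ne_of_gt hR0) (ne_of_gt hSabpos),
          Real.log_rpow hS0] at h1
        exact h1
      have hlogR : Real.log 2 ≤ Real.log R := loglele (by norm_num) hR2
      have hlogm₁ : Real.log (m₁:ℝ) ≤ Real.log S := loglele hm₁0 hm₁le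
      -- t - √m₁ ≤ 1/(2√m₁)
      have hty : (t - Real.sqrt (m₁:ℝ)) * (2*Real.sqrt (m₁:ℝ)) ≤ 1 := by
        nlinarith only [hsm₁sq, sq_nonneg (t - Real.sqrt (m₁:ℝ)), hSM, hm₁r, hSdef]
      have htdiv : t - Real.sqrt (m₁:ℝ) ≤ 1/(2*Real.sqrt (m₁:ℝ)) := by
        rw [le_div_iff₀ (by linarith only [hsm₁])]
        exact hty
      have h8' : (t - Real.sqrt (m₁:ℝ)) * K ≤ (1/(2*Real.sqrt (m₁:ℝ))) * K :=
        mul_le_mul_of_nonneg_right htdiv hK.le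
      have hinv : K * (1/(2*(m₁:ℝ))) * Real.sqrt (m₁:ℝ) = K * (1/(2*Real.sqrt (m₁:ℝ))) := by
        have h2m : (m₁:ℝ) ≠ 0 := hm₁0.ne'
        have h2y : Real.sqrt (m₁:ℝ) ≠ 0 := hsm₁.ne'
        field_simp
        linear_combination hsm₁sq
      have h9 : t*K/Real.sqrt (m₁:ℝ) ≤ K + K*(1/(2*(m₁:ℝ))) := by
        rw [div_le_iff₀ hsm₁]
        nlinarith only [h8', hinv]
      have hKty : -(K * (1/(2*(m₁:ℝ)))) ≤ K - t*K/Real.sqrt (m₁:ℝ) := by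
        linarith only [h9]
      have hKdiv : K * (1/(2*(m₁:ℝ))) ≤ K * (1/576) := by
        apply mul_le_mul_of_nonneg_left _ hK.le
        apply one_div_le_one_div_of_le (by norm_num)
        linarith only [hm288]
      have hq2r : q ≤ 2*(a/b) := by rw [hqdef]; linarith only [haab]
      have hprod : 0 ≤ (a/b - 1) * (Real.log S - 5) :=
        mul_nonneg (by linarith only [hba1]) (by linarith only [hlogS5])
      have hneg : -t*K/Real.sqrt (m₁:ℝ) = -(t*K/Real.sqrt (m₁:ℝ)) := by
        rw [neg_mul, neg_div]
      rw [hneg] at hlog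
      linarith only [hlog, hlogN, hlogR, hlogm₁, hKty, hKdiv, hKq, hq2r, hlogS5, hlog2,
        hba1, hprod]
    -- integral bounds
    have hkey1 := key m₁ m₁ hm₁1 le_rfl
    rw [hm₁M] at hkey1
    have hdisj12 : Disjoint {ω | m₁ ≤ C ω ∧ C ω ≤ m₁} {ω | M ≤ C ω ∧ C ω ≤ N} := by
      rw [Set.disjoint_left]
      intro ω h1 h2
      simp only [Set.mem_setOf_eq] at h1 h2
      omega
    have hms2 : MeasurableSet {ω | M ≤ C ω ∧ C ω ≤ N} :=
      hmeas (show MeasurableSet {n : ℕ | M ≤ n ∧ n ≤ N} from trivial)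
    have hsum : (∫ ω in {ω | m₁ ≤ C ω ∧ C ω ≤ m₁}, g (C ω) ∂μ) +
        (∫ ω in {ω | M ≤ C ω ∧ C ω ≤ N}, g (C ω) ∂μ) ≤ ∫ ω, g (C ω) ∂μ := by
      rw [← setIntegral_union hdisj12 hms2 hint.integrableOn hint.integrableOn]
      exact setIntegral_le_integral hint hg0ae
    have hτMN : 0 ≤ (μ {ω | M ≤ C ω}).toReal - (μ {ω | N+1 ≤ C ω}).toReal := by
      linarith only [hτMN1]
    have hkey2' : ((μ {ω | M ≤ C ω}).toReal - (μ {ω | N+1 ≤ C ω}).toReal) *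
        (Real.exp (-K) * (1/(N:ℝ))) ≤ ∫ ω in {ω | M ≤ C ω ∧ C ω ≤ N}, g (C ω) ∂μ := by
      refine le_trans ?_ hkey2
      apply mul_le_mul_of_nonneg_left _ hτMN
      exact mul_le_mul_of_nonneg_right hN1exp (by positivity)
    have hlowm₁ := hlow m₁ hm₁1
    have hm₁Sa : S^(-a) ≤ (m₁:ℝ)^(-a) := by
      rw [Real.rpow_neg hS0.le, Real.rpow_neg hm₁0.le]
      exact inv_anti₀ (Real.rpow_pos_of_pos hm₁0 _)
        (Real.rpow_le_rpow hm₁0.le hm₁le ha.le)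
    have hc₁0 : (0:ℝ) ≤ Real.exp (-t * K / Real.sqrt (m₁:ℝ)) * (1/(m₁:ℝ)) := by positivity
    have hc₂0 : (0:ℝ) ≤ Real.exp (-K) * (1/(N:ℝ)) := by positivity
    have hu1 : (A * (m₁:ℝ)^(-a) - (μ {ω | M ≤ C ω}).toReal) *
        (Real.exp (-t * K / Real.sqrt (m₁:ℝ)) * (1/(m₁:ℝ))) ≤
        ((μ {ω | m₁ ≤ C ω}).toReal - (μ {ω | M ≤ C ω}).toReal) *
        (Real.exp (-t * K / Real.sqrt (m₁:ℝ)) * (1/(m₁:ℝ))) :=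
      mul_le_mul_of_nonneg_right (by linarith only [hlowm₁]) hc₁0
    have hu2 : ((μ {ω | M ≤ C ω}).toReal - A/2 * S^(-a)) * (Real.exp (-K) * (1/(N:ℝ))) ≤
        ((μ {ω | M ≤ C ω}).toReal - (μ {ω | N+1 ≤ C ω}).toReal) *
        (Real.exp (-K) * (1/(N:ℝ))) :=
      mul_le_mul_of_nonneg_right (by linarith only [hupN]) hc₂0
    have hp1 : 0 ≤ (Real.exp (-t * K / Real.sqrt (m₁:ℝ)) * (1/(m₁:ℝ)) -
        Real.exp (-K) * (1/(N:ℝ))) * (A * S^(-a) - (μ {ω | M ≤ C ω}).toReal) :=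
      mul_nonneg (by linarith only [hc21]) (by linarith only [hτc])
    have hp2 : 0 ≤ (Real.exp (-t * K / Real.sqrt (m₁:ℝ)) * (1/(m₁:ℝ))) *
        (A * ((m₁:ℝ)^(-a) - S^(-a))) :=
      mul_nonneg hc₁0 (mul_nonneg hA.le (by linarith only [hm₁Sa]))
    have hmain : (Real.exp (-K) * (1/(N:ℝ))) * (A/2 * S^(-a)) ≤
        ((μ {ω | m₁ ≤ C ω}).toReal - (μ {ω | M ≤ C ω}).toReal) *
          (Real.exp (-t * K / Real.sqrt (m₁:ℝ)) * (1/(m₁:ℝ))) +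
        ((μ {ω | M ≤ C ω}).toReal - (μ {ω | N+1 ≤ C ω}).toReal) *
          (Real.exp (-K) * (1/(N:ℝ))) := by
      nlinarith only [hu1, hu2, hp1, hp2]
    linarith only [hkey1, hkey2', hsum, hfinal_const, hmain]
end
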